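/- arXiv:1801.02564 — 5 statements merged into one kernel-verified Lean document; each statement's English description precedes it below -/
import Mathlib

section
/- Let G be a topological group, Λ ⊆ I ⊆ G, and 𝔍, F ⊆ C(G,𝕋) (continuous circle-valued functions). Suppose (1) for every a ∈ I there exists x_a ∈ Λ such that for all ψ ∈ F, the angular distance d_a(ψ(x_a), ψ(a)) < ε, and (2) every φ ∈ 𝔍 can be written φ = ψ·κ with ψ ∈ F and κ ∈ C(G,𝕋) satisfying d_a(κ(t),1) < ε for all t ∈ I. Then for every f in the closure A_𝔍(G) = {Σ α_φ φ : Σ|α_φ| < ∞, φ ∈ 𝔍}, one has sup_{t∈I} |f(t)| ≤ (6π+2)·ε·Σ|α_φ| + sup_{x∈Λ} |f(x)|. -/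
open scoped BigOperators

open Complex

lemma aux_abs_sin_le (x : ℝ) : |Real.sin x| ≤ |x| := by
  wlog hx : 0 ≤ x with H
  · have := H (-x) (by linarith [lt_of_not_ge hx])
    simpa [Real.sin_neg] using this
  rw [_root_.abs_of_nonneg hx, abs_le]
  refine ⟨?_, Real.sin_le hx⟩
  rcases le_or_gt x 1 with h | h
  · have : 0 ≤ Real.sin x := Real.sin_nonneg_of_nonneg_of_le_pi hx
      (h.trans (by linarith [Real.pi_gt_three]))
    linarith
  · linarith [Real.neg_one_le_sin x]

lemma aux_norm_exp_sub_one (θ : ℝ) : ‖Complex.exp (θ * I) - 1‖ ≤ |θ| := by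
  have e1 : ((θ:ℂ) * I) = (θ/2 : ℝ) * I + (θ/2 : ℝ) * I := by push_cast; ring
  have e2 : ((θ/2 : ℝ) : ℂ) * I + ((-(θ/2) : ℝ) : ℂ) * I = 0 := by push_cast; ring
  have h1 : Complex.exp (θ * I) - 1
      = Complex.exp ((θ/2 : ℝ) * I) * (Complex.exp ((θ/2 : ℝ) * I) - Complex.exp ((-(θ/2) : ℝ) * I)) := by
    rw [mul_sub, ← Complex.exp_add, ← Complex.exp_add, e2, Complex.exp_zero, ← e1]
  have h2 : Complex.exp ((θ/2 : ℝ) * I) - Complex.exp ((-(θ/2) : ℝ) * I)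
      = 2 * ((Real.sin (θ/2) : ℂ)) * I := by
    rw [Complex.exp_mul_I, Complex.exp_mul_I, Complex.ofReal_neg, Complex.cos_neg,
      Complex.sin_neg, Complex.ofReal_sin]
    ring
  rw [h1, h2, norm_mul]
  simp only [Complex.norm_exp_ofReal_mul_I, one_mul]
  have h3 : ‖2 * ((Real.sin (θ/2) : ℂ)) * I‖ = 2 * |Real.sin (θ/2)| := by
    rw [norm_mul, norm_mul, Complex.norm_I, mul_one, Complex.norm_real, Real.norm_eq_abs]
    simp
  rw [h3]
  calc 2 * |Real.sin (θ/2)| ≤ 2 * |θ/2| := by linarith [aux_abs_sin_le (θ/2)]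
    _ = |θ| := by rw [abs_div, _root_.abs_two]; ring

lemma aux_norm_toCircle_sub_one (u : AddCircle (1:ℝ)) :
    ‖(AddCircle.toCircle u : ℂ) - 1‖ ≤ 2 * Real.pi * ‖u‖ := by
  obtain ⟨x⟩ := u
  have hnorm : ‖(x : AddCircle (1:ℝ))‖ = |x - round x| := by
    rw [AddCircle.norm_eq]; simp
  have hcoe : ((x - round x : ℝ) : AddCircle (1:ℝ)) = (x : AddCircle (1:ℝ)) := by
    symm
    rw [QuotientAddGroup.eq]
    refine AddSubgroup.mem_zmultiples_iff.mpr ⟨-round x, ?_⟩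
    simp
    ring
  show ‖(AddCircle.toCircle ((x:ℝ) : AddCircle (1:ℝ)) : ℂ) - 1‖ ≤ 2 * Real.pi * ‖((x:ℝ) : AddCircle (1:ℝ))‖
  rw [hnorm, ← hcoe, AddCircle.toCircle_apply_mk, Circle.coe_exp]
  calc ‖Complex.exp ((2 * Real.pi / 1 * (x - round x) : ℝ) * I) - 1‖
      ≤ |2 * Real.pi / 1 * (x - round x)| := aux_norm_exp_sub_one _
    _ = 2 * Real.pi * |x - round x| := by
        rw [abs_mul, _root_.abs_of_nonneg (by positivity : (0:ℝ) ≤ 2 * Real.pi / 1)]; ring_nf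

lemma aux_norm_toCircle_sub (u v : AddCircle (1:ℝ)) :
    ‖(AddCircle.toCircle u : ℂ) - AddCircle.toCircle v‖ ≤ 2 * Real.pi * dist u v := by
  have key : (AddCircle.toCircle u : ℂ) - AddCircle.toCircle v
      = (AddCircle.toCircle v : ℂ) * ((AddCircle.toCircle (u - v) : ℂ) - 1) := by
    rw [mul_sub, mul_one, ← Circle.coe_mul, ← AddCircle.toCircle_add,
      show v + (u - v) = u from by abel]
  rw [key, norm_mul]
  have h1 : ‖(AddCircle.toCircle v : ℂ)‖ = 1 := by
    exact Circle.norm_coe _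
  rw [h1, one_mul, dist_eq_norm]
  exact aux_norm_toCircle_sub_one _

/-- Matching sets, slightly thickened, are sampling sets: if `Λ ⊆ I` is an
`(F,I,ε)`-matching set and every `φ ∈ 𝔍` factors as `ψ·κ` with `ψ ∈ F` and
`κ` sending `I` into the `ε`-ball around `1`, then every
`f = Σ_{φ∈𝔍} α_φ·φ ∈ A_𝔍(G)` satisfies
`sup_I |f| ≤ (6π+2)·ε·Σ|α_φ| + sup_Λ |f|`.
The circle `𝕋` is modelled as `AddCircle 1`, whose metric is the angular
distance, and `AddCircle.toCircle` realizes `e^{2πi(·)}`. -/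
theorem matching_is_sampling {G : Type*} [Group G] [TopologicalSpace G]
    [IsTopologicalGroup G]
    (I Λ : Set G) (hΛI : Λ ⊆ I)
    (𝔍 F : Set (G → AddCircle (1 : ℝ)))
    (h𝔍cont : ∀ φ ∈ 𝔍, Continuous φ) (hFcont : ∀ ψ ∈ F, Continuous ψ)
    (ε : ℝ) (hε : 0 < ε)
    (hmatch : ∀ a ∈ I, ∃ x ∈ Λ, ∀ ψ ∈ F, dist (ψ x) (ψ a) < ε)
    (hfact : ∀ φ ∈ 𝔍, ∃ ψ ∈ F, ∃ κ : G → AddCircle (1 : ℝ), Continuous κ ∧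
      (∀ t ∈ I, dist (κ t) 0 < ε) ∧ ∀ t, φ t = ψ t + κ t)
    (α : (G → AddCircle (1 : ℝ)) → ℂ) (hsupp : ∀ φ, α φ ≠ 0 → φ ∈ 𝔍)
    (hsum : Summable fun φ : 𝔍 => ‖α (φ : G → AddCircle (1 : ℝ))‖)
    (f : G → ℂ)
    (hf : ∀ t, f t = ∑' φ : 𝔍, α (φ : G → AddCircle (1 : ℝ)) *
      (AddCircle.toCircle ((φ : G → AddCircle (1 : ℝ)) t) : ℂ))
    (B : ℝ) (hB : ∀ x ∈ Λ, ‖f x‖ ≤ B) :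
    ∀ t ∈ I, ‖f t‖ ≤ (6 * Real.pi + 2) * ε *
      (∑' φ : 𝔍, ‖α (φ : G → AddCircle (1 : ℝ))‖) + B := by
  intro t ht
  obtain ⟨x, hxΛ, hx⟩ := hmatch t ht
  have hxI : x ∈ I := hΛI hxΛ
  set C : ℝ := (6 * Real.pi + 2) * ε with hCdef
  -- pointwise bound on the oscillation of each character
  have hterm : ∀ φ : 𝔍, ‖(AddCircle.toCircle ((φ : G → AddCircle (1:ℝ)) t) : ℂ)
      - (AddCircle.toCircle ((φ : G → AddCircle (1:ℝ)) x) : ℂ)‖ ≤ C := by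
    rintro ⟨φ, hφ⟩
    obtain ⟨ψ, hψF, κ, hκc, hκ, hφeq⟩ := hfact φ hφ
    have d1 : dist (φ t) (ψ t) < ε := by
      rw [hφeq t, dist_eq_norm, add_sub_cancel_left]
      simpa [dist_eq_norm] using hκ t ht
    have d2 : dist (ψ t) (ψ x) < ε := by
      rw [dist_comm]; exact hx ψ hψF
    have d3 : dist (ψ x) (φ x) < ε := by
      rw [hφeq x, dist_eq_norm]
      have : ψ x - (ψ x + κ x) = -(κ x) := by abel
      rw [this, norm_neg]
      simpa [dist_eq_norm] using hκ x hxI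
    have tri : ‖(AddCircle.toCircle (φ t) : ℂ) - AddCircle.toCircle (φ x)‖
        ≤ ‖(AddCircle.toCircle (φ t) : ℂ) - AddCircle.toCircle (ψ t)‖
          + ‖(AddCircle.toCircle (ψ t) : ℂ) - AddCircle.toCircle (ψ x)‖
          + ‖(AddCircle.toCircle (ψ x) : ℂ) - AddCircle.toCircle (φ x)‖ := by
      have := norm_sub_le_norm_sub_add_norm_sub
        ((AddCircle.toCircle (φ t) : ℂ)) ((AddCircle.toCircle (ψ t) : ℂ))
        ((AddCircle.toCircle (φ x) : ℂ))
      calc ‖(AddCircle.toCircle (φ t) : ℂ) - AddCircle.toCircle (φ x)‖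
          ≤ ‖(AddCircle.toCircle (φ t) : ℂ) - AddCircle.toCircle (ψ t)‖
            + ‖(AddCircle.toCircle (ψ t) : ℂ) - AddCircle.toCircle (φ x)‖ :=
            norm_sub_le_norm_sub_add_norm_sub _ _ _
        _ ≤ _ := by
            have := norm_sub_le_norm_sub_add_norm_sub
              ((AddCircle.toCircle (ψ t) : ℂ)) ((AddCircle.toCircle (ψ x) : ℂ))
              ((AddCircle.toCircle (φ x) : ℂ))
            linarith
    have b1 := aux_norm_toCircle_sub (φ t) (ψ t)
    have b2 := aux_norm_toCircle_sub (ψ t) (ψ x)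
    have b3 := aux_norm_toCircle_sub (ψ x) (φ x)
    have hπ : (0:ℝ) < 2 * Real.pi := by positivity
    have : ‖(AddCircle.toCircle (φ t) : ℂ) - AddCircle.toCircle (φ x)‖
        ≤ 2 * Real.pi * ε + 2 * Real.pi * ε + 2 * Real.pi * ε := by
      nlinarith [mul_lt_mul_of_pos_left d1 hπ, mul_lt_mul_of_pos_left d2 hπ,
        mul_lt_mul_of_pos_left d3 hπ]
    calc ‖(AddCircle.toCircle (φ t) : ℂ) - AddCircle.toCircle (φ x)‖
        ≤ 2 * Real.pi * ε + 2 * Real.pi * ε + 2 * Real.pi * ε := this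
      _ ≤ C := by rw [hCdef]; nlinarith
  -- summability of the series at every point
  have hsummT : ∀ s : G, Summable (fun φ : 𝔍 =>
      α (φ : G → AddCircle (1:ℝ)) * (AddCircle.toCircle ((φ : G → AddCircle (1:ℝ)) s) : ℂ)) := by
    intro s
    apply Summable.of_norm
    have : (fun φ : 𝔍 => ‖α (φ : G → AddCircle (1:ℝ))
        * (AddCircle.toCircle ((φ : G → AddCircle (1:ℝ)) s) : ℂ)‖)
        = fun φ : 𝔍 => ‖α (φ : G → AddCircle (1:ℝ))‖ := by
      funext φ
      simp [norm_mul, Circle.norm_coe]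
    rw [this]
    exact hsum
  have hCnn : 0 ≤ C := by positivity
  -- bound the difference
  have hdiff : ‖f t - f x‖ ≤ (∑' φ : 𝔍, ‖α (φ : G → AddCircle (1:ℝ))‖) * C := by
    rw [hf t, hf x, ← Summable.tsum_sub (hsummT t) (hsummT x)]
    refine tsum_of_norm_bounded (hsum.hasSum.mul_right C) ?_
    intro φ
    rw [← mul_sub, norm_mul]
    exact mul_le_mul_of_nonneg_left (hterm φ) (norm_nonneg _)
  calc ‖f t‖ = ‖(f t - f x) + f x‖ := by ring_nf
    _ ≤ ‖f t - f x‖ + ‖f x‖ := norm_add_le _ _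
    _ ≤ (∑' φ : 𝔍, ‖α (φ : G → AddCircle (1:ℝ))‖) * C + B :=
        add_le_add hdiff (hB x hxΛ)
    _ = C * (∑' φ : 𝔍, ‖α (φ : G → AddCircle (1:ℝ))‖) + B := by ring
end

section
/- Let G be an abelian topological group and Λ ⊆ G. Suppose that for every finite set F of continuous characters of G and every ε > 0, Λ is an (F,G,ε)-matching set, i.e., for every a ∈ G there exists x_a ∈ Λ with d_a(χ(x_a), χ(a)) < ε for all χ ∈ F. Then Λ is a set of uniqueness for the almost periodic functions AP(G): if f ∈ AP(G) vanishes on Λ, then f = 0. -/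
open scoped BigOperators

/-- If `Λ ⊆ G` is an `(F,G,ε)`-matching set for every finite set `F` of continuous
characters and every `ε > 0`, then `Λ` is a set of uniqueness for the almost
periodic functions: any uniform limit of trigonometric polynomials vanishing on `Λ`
vanishes identically. Characters are modelled as continuous additive homomorphisms
`G →+ AddCircle 1`, and `AddCircle.toCircle` realizes `e^{2πi(·)} : 𝕋 → ℂ`. -/
theorem matching_implies_uniqueness_AP {G : Type*} [AddCommGroup G]
    [TopologicalSpace G] [IsTopologicalAddGroup G] (Λ : Set G)
    (hmatch : ∀ (F : Finset {χ : G →+ AddCircle (1 : ℝ) // Continuous χ}) (ε : ℝ),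
      0 < ε → ∀ a : G, ∃ x ∈ Λ, ∀ χ ∈ F, dist (χ.1 x) (χ.1 a) < ε)
    (f : G → ℂ)
    (hf : ∀ δ : ℝ, 0 < δ → ∃ (n : ℕ) (α : Fin n → ℂ)
      (χ : Fin n → G →+ AddCircle (1 : ℝ)), (∀ i, Continuous (χ i)) ∧
      ∀ g : G, ‖f g - ∑ i, α i * (AddCircle.toCircle (χ i g) : ℂ)‖ ≤ δ)
    (hvanish : ∀ x ∈ Λ, f x = 0) :
    ∀ g : G, f g = 0 := by
  intro g
  have key : ∀ δ : ℝ, 0 < δ → ‖f g‖ ≤ 3 * δ := by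
    intro δ hδ
    obtain ⟨n, α, χ, hχcont, happrox⟩ := hf δ hδ
    -- bound on coefficients
    set S : ℝ := ∑ i, ‖α i‖ + 1 with hS
    have hSpos : 0 < S := by
      have : (0:ℝ) ≤ ∑ i, ‖α i‖ := Finset.sum_nonneg fun i _ => norm_nonneg _
      linarith
    -- uniform continuity of toCircle
    haveI : Fact ((0:ℝ) < 1) := ⟨one_pos⟩
    have hUC : UniformContinuous (fun x : AddCircle (1:ℝ) => (AddCircle.toCircle x : ℂ)) :=
      CompactSpace.uniformContinuous_of_continuous
        (continuous_subtype_val.comp AddCircle.continuous_toCircle)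
    obtain ⟨ε, hε, hεball⟩ := Metric.uniformContinuous_iff.mp hUC (δ / S) (div_pos hδ hSpos)
    -- the finite set of characters
    classical
    let F : Finset {χ : G →+ AddCircle (1 : ℝ) // Continuous χ} :=
      Finset.image (fun i => ⟨χ i, hχcont i⟩) Finset.univ
    obtain ⟨x, hxΛ, hx⟩ := hmatch F ε hε g
    have hdiff : ∀ i : Fin n,
        ‖(AddCircle.toCircle (χ i x) : ℂ) - (AddCircle.toCircle (χ i g) : ℂ)‖ ≤ δ / S := by
      intro i
      have hmem : (⟨χ i, hχcont i⟩ : {χ : G →+ AddCircle (1 : ℝ) // Continuous χ}) ∈ F :=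
        Finset.mem_image_of_mem _ (Finset.mem_univ i)
      have := hεball (hx _ hmem)
      rw [dist_eq_norm] at this
      exact le_of_lt this
    -- compare polynomial values
    have hpoly : ‖(∑ i, α i * (AddCircle.toCircle (χ i x) : ℂ)) -
        ∑ i, α i * (AddCircle.toCircle (χ i g) : ℂ)‖ ≤ δ := by
      rw [← Finset.sum_sub_distrib]
      calc ‖∑ i, (α i * (AddCircle.toCircle (χ i x) : ℂ) -
              α i * (AddCircle.toCircle (χ i g) : ℂ))‖
          ≤ ∑ i, ‖α i * (AddCircle.toCircle (χ i x) : ℂ) -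
              α i * (AddCircle.toCircle (χ i g) : ℂ)‖ := norm_sum_le _ _
        _ ≤ ∑ i : Fin n, ‖α i‖ * (δ / S) := by
            refine Finset.sum_le_sum fun i _ => ?_
            rw [← mul_sub, norm_mul]
            exact mul_le_mul_of_nonneg_left (hdiff i) (norm_nonneg _)
        _ = (∑ i, ‖α i‖) * (δ / S) := by rw [← Finset.sum_mul]
        _ ≤ S * (δ / S) := by
            apply mul_le_mul_of_nonneg_right _ (le_of_lt (div_pos hδ hSpos))
            simp [hS]
        _ = δ := by field_simp
    have h1 := happrox g
    have h2 := happrox x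
    rw [hvanish x hxΛ] at h2
    have h3 : ‖∑ i, α i * (AddCircle.toCircle (χ i x) : ℂ)‖ ≤ δ := by
      simpa using h2
    calc ‖f g‖ = ‖(f g - ∑ i, α i * (AddCircle.toCircle (χ i g) : ℂ))
          + ((∑ i, α i * (AddCircle.toCircle (χ i g) : ℂ)) -
              ∑ i, α i * (AddCircle.toCircle (χ i x) : ℂ))
          + ∑ i, α i * (AddCircle.toCircle (χ i x) : ℂ)‖ := by ring_nf
      _ ≤ ‖(f g - ∑ i, α i * (AddCircle.toCircle (χ i g) : ℂ))
          + ((∑ i, α i * (AddCircle.toCircle (χ i g) : ℂ)) -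
              ∑ i, α i * (AddCircle.toCircle (χ i x) : ℂ))‖
          + ‖∑ i, α i * (AddCircle.toCircle (χ i x) : ℂ)‖ := norm_add_le _ _
      _ ≤ ‖f g - ∑ i, α i * (AddCircle.toCircle (χ i g) : ℂ)‖
          + ‖(∑ i, α i * (AddCircle.toCircle (χ i g) : ℂ)) -
              ∑ i, α i * (AddCircle.toCircle (χ i x) : ℂ)‖
          + ‖∑ i, α i * (AddCircle.toCircle (χ i x) : ℂ)‖ := by
            gcongr; exact norm_add_le _ _
      _ ≤ δ + δ + δ := by
            gcongr
            rw [norm_sub_rev]; exact hpoly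
      _ = 3 * δ := by ring
  have : ‖f g‖ ≤ 0 := by
    by_contra h
    push_neg at h
    have := key (‖f g‖ / 6) (by linarith)
    linarith
  simpa using le_antisymm this (norm_nonneg _)
end

section
/- Let ε ∈ (0,1), n ∈ ℕ, and suppose (ℓ_k)_{k∈ℕ} and (L_k)_{k∈ℕ} are sequences of positive integers such that for some γ > 0 and k₀ ∈ ℕ, for all k ≥ k₀: −n·log(L_k)/ε^n + ℓ_k > −(1+γ)·log(k)/log(1−ε^n). Then the series Σ_k (L_k·e/n)^n · (1−ε^n)^{ℓ_k} converges. -/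
/-- Key convergence estimate in the Borel–Cantelli argument: if for some `γ > 0` and
`k₀`, for all `k ≥ k₀` one has `−n·log(L_k)/ε^n + ℓ_k > −(1+γ)·log k / log(1−ε^n)`,
then `Σ_k (L_k·e/n)^n (1−ε^n)^{ℓ_k}` converges. -/
theorem summable_borel_cantelli_bound (ε : ℝ) (hε0 : 0 < ε) (hε1 : ε < 1) (n : ℕ)
    (ℓ L : ℕ → ℕ) (hℓ : ∀ k, 0 < ℓ k) (hL : ∀ k, 0 < L k)
    (γ : ℝ) (hγ : 0 < γ) (k₀ : ℕ)
    (h : ∀ k ≥ k₀, -((n : ℝ) * Real.log (L k)) / ε ^ n + ℓ k >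
      -((1 + γ) * Real.log k) / Real.log (1 - ε ^ n)) :
    Summable fun k : ℕ => ((L k : ℝ) * Real.exp 1 / n) ^ n * (1 - ε ^ n) ^ ℓ k := by
  rcases Nat.eq_zero_or_pos n with hn | hn
  · subst hn
    exact (summable_congr fun k => by simp [zero_pow (hℓ k).ne']).mpr summable_zero
  -- main case: n ≥ 1
  set s : ℝ := ε ^ n with hs
  have hs0 : 0 < s := pow_pos hε0 n
  have hs1 : s < 1 := pow_lt_one₀ hε0.le hε1 hn.ne'
  set q : ℝ := 1 - s with hq
  have hq0 : 0 < q := by simp only [hq]; linarith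
  have ht : Real.log q < -s := by
    have hne : q ≠ 1 := by simp only [hq]; intro hh; nlinarith
    have := Real.log_lt_sub_one_of_pos hq0 hne
    simp only [hq] at this ⊢
    linarith
  have ht0 : Real.log q < 0 := by linarith
  set C : ℝ := Real.exp ((n : ℝ) * (1 - Real.log n)) with hC
  apply Summable.of_norm_bounded_eventually_nat (g := fun k => C * (k : ℝ) ^ (-(1 + γ)))
  · exact (Real.summable_nat_rpow.mpr (by linarith)).mul_left C
  · filter_upwards [Filter.eventually_ge_atTop (max k₀ 1)] with k hk
    have hk0 : 1 ≤ k := le_trans (le_max_right _ _) hk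
    have hkpos : (0 : ℝ) < k := by exact_mod_cast hk0
    have hL1 : (1 : ℝ) ≤ L k := by exact_mod_cast hL k
    have hlogL : 0 ≤ Real.log (L k) := Real.log_nonneg hL1
    have h1 := h k (le_trans (le_max_left _ _) hk)
    set a : ℝ := (n : ℝ) * Real.log (L k) with ha
    have ha0 : 0 ≤ a := by positivity
    set t : ℝ := Real.log q with htt
    -- key inequality: a + ℓ k * t < -(1+γ) * log k
    have key : a + (ℓ k : ℝ) * t < -((1 + γ) * Real.log k) := by
      have h2 : (-a / s + (ℓ k : ℝ)) * t < (-((1 + γ) * Real.log k) / t) * t :=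
        mul_lt_mul_of_neg_right h1 ht0
      rw [div_mul_cancel₀ _ ht0.ne] at h2
      have h4 : (a / s) * t ≤ (a / s) * (-s) :=
        mul_le_mul_of_nonneg_left ht.le (by positivity)
      have h5 : (a / s) * (-s) = -a := by field_simp
      have h6 : (-a / s + (ℓ k : ℝ)) * t = -((a / s) * t) + (ℓ k : ℝ) * t := by ring
      nlinarith [h2, h4, h5, h6]
    -- rewrite the term as an exponential
    have hx0 : (0 : ℝ) < (L k : ℝ) * Real.exp 1 / n := by positivity
    have hlogx : Real.log ((L k : ℝ) * Real.exp 1 / n)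
        = Real.log (L k) + 1 - Real.log n := by
      rw [Real.log_div (by positivity) (by positivity),
        Real.log_mul (by positivity) (Real.exp_pos 1).ne', Real.log_exp]
    have heq : ((L k : ℝ) * Real.exp 1 / n) ^ n * q ^ ℓ k
        = Real.exp ((n : ℝ) * (Real.log (L k) + 1 - Real.log n) + (ℓ k : ℝ) * t) := by
      rw [Real.exp_add]
      congr 1
      · rw [← hlogx, ← Real.exp_log hx0, Real.log_exp, ← Real.exp_nat_mul]
      · rw [htt, ← Real.log_pow, Real.exp_log (pow_pos hq0 _)]
    have hrw : C * (k : ℝ) ^ (-(1 + γ))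
        = Real.exp ((n : ℝ) * (1 - Real.log n) + -((1 + γ) * Real.log k)) := by
      rw [Real.exp_add, hC, Real.rpow_def_of_pos hkpos]
      ring_nf
    rw [Real.norm_eq_abs, abs_of_nonneg (by positivity), heq, hrw]
    apply (Real.exp_lt_exp.mpr ?_).le
    nlinarith [key]
end

section
/- Let p₁,…,p_{n−1} be positive integers and ε ∈ (0,1/2). Then ε·(∏_{k=1}^{n−1}(2⌊p_k ε⌋+1) + 1) ≥ 2·ε^n·p₁⋯p_{n−1}. -/
open Finset

private lemma aux_floor_lin (x : ℝ) (hx : 0 ≤ x) : x ≤ 2 * (⌊x⌋ : ℝ) + 1 := by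
  rcases lt_or_ge x 1 with h | h
  · have h1 : (0:ℤ) ≤ ⌊x⌋ := Int.floor_nonneg.2 hx
    have h2 : (0:ℝ) ≤ (⌊x⌋:ℝ) := by exact_mod_cast h1
    linarith
  · have := Int.sub_one_lt_floor x
    linarith

private lemma aux_floor_sqrt2 (x : ℝ) (hx : 1 ≤ x) :
    Real.sqrt 2 * x ≤ 2 * (⌊x⌋ : ℝ) + 1 := by
  have hf : (1:ℝ) ≤ (⌊x⌋:ℝ) := by
    exact_mod_cast Int.le_floor.2 (by exact_mod_cast hx)
  have hlt : x < (⌊x⌋:ℝ) + 1 := Int.lt_floor_add_one x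
  have hs : Real.sqrt 2 ≤ 1.5 := by
    rw [show (1.5:ℝ) = Real.sqrt (1.5^2) from (Real.sqrt_sq (by norm_num)).symm]
    apply Real.sqrt_le_sqrt; norm_num
  have hs0 : (0:ℝ) ≤ Real.sqrt 2 := Real.sqrt_nonneg 2
  nlinarith [mul_nonneg (sub_nonneg.2 hs) (sub_nonneg.2 hf)]

/-- For positive integers `p₁,…,p_{n−1}` and `ε ∈ (0,1/2)`,
`ε·(∏(2⌊p_k ε⌋+1) + 1) ≥ 2·ε^n·p₁⋯p_{n−1}`. -/
theorem floor_product_bound (n : ℕ) (hn : 1 ≤ n) (p : ℕ → ℕ)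
    (hp : ∀ k < n - 1, 0 < p k) (ε : ℝ) (hε0 : 0 < ε) (hε : ε < 1 / 2) :
    2 * ε ^ n * ∏ k ∈ range (n - 1), (p k : ℝ) ≤
      ε * ((∏ k ∈ range (n - 1), (2 * (⌊(p k : ℝ) * ε⌋ : ℝ) + 1)) + 1) := by
  set m := n - 1 with hm
  set x : ℕ → ℝ := fun k => (p k : ℝ) * ε with hxdef
  have hx0 : ∀ k, 0 ≤ x k := fun k => mul_nonneg (Nat.cast_nonneg _) hε0.le
  have hf1 : ∀ k ∈ range m, (1:ℝ) ≤ 2 * (⌊x k⌋:ℝ) + 1 := by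
    intro k _
    have h1 : (0:ℤ) ≤ ⌊x k⌋ := Int.floor_nonneg.2 (hx0 k)
    have h2 : (0:ℝ) ≤ (⌊x k⌋:ℝ) := by exact_mod_cast h1
    linarith
  have hfx : ∀ k ∈ range m, x k ≤ 2 * (⌊x k⌋:ℝ) + 1 :=
    fun k _ => aux_floor_lin _ (hx0 k)
  -- key inequality
  have key : 2 * ∏ k ∈ range m, x k ≤
      (∏ k ∈ range m, (2 * (⌊x k⌋:ℝ) + 1)) + 1 := by
    set S := (range m).filter (fun k => 1 ≤ x k) with hS
    have hsplitf := prod_filter_mul_prod_filter_not (range m) (fun k => 1 ≤ x k)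
        (fun k => 2 * (⌊x k⌋:ℝ) + 1)
    have hsplitx := prod_filter_mul_prod_filter_not (range m) (fun k => 1 ≤ x k) x
    have hxc_nonneg : (0:ℝ) ≤ ∏ k ∈ (range m).filter (fun k => ¬ 1 ≤ x k), x k :=
      prod_nonneg fun k _ => hx0 k
    have hxS_nonneg : (0:ℝ) ≤ ∏ k ∈ S, x k := prod_nonneg fun k _ => hx0 k
    have hfc : ∏ k ∈ (range m).filter (fun k => ¬ 1 ≤ x k), x k ≤
        ∏ k ∈ (range m).filter (fun k => ¬ 1 ≤ x k), (2 * (⌊x k⌋:ℝ) + 1) :=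
      prod_le_prod (fun k _ => hx0 k) (fun k hk => hfx k (mem_of_mem_filter k hk))
    by_cases hcard : 2 ≤ S.card
    · -- two big indices: use √2 bound
      have h1 : ∏ k ∈ S, (Real.sqrt 2 * x k) ≤ ∏ k ∈ S, (2 * (⌊x k⌋:ℝ) + 1) := by
        apply prod_le_prod
        · exact fun k _ => mul_nonneg (Real.sqrt_nonneg 2) (hx0 k)
        · intro k hk
          exact aux_floor_sqrt2 _ ((mem_filter.1 hk).2)
      have h2 : ∏ k ∈ S, (Real.sqrt 2 * x k) =
          Real.sqrt 2 ^ S.card * ∏ k ∈ S, x k := by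
        rw [prod_mul_distrib, prod_const]
      have h3 : (2:ℝ) ≤ Real.sqrt 2 ^ S.card := by
        have hsq : Real.sqrt 2 ^ 2 = 2 := Real.sq_sqrt (by norm_num)
        calc (2:ℝ) = Real.sqrt 2 ^ 2 := hsq.symm
          _ ≤ Real.sqrt 2 ^ S.card := by
              apply pow_le_pow_right₀ _ hcard
              nlinarith [Real.sq_sqrt (show (0:ℝ) ≤ 2 by norm_num),
                Real.sqrt_nonneg 2]
      have h4 : 2 * ∏ k ∈ S, x k ≤ ∏ k ∈ S, (2 * (⌊x k⌋:ℝ) + 1) := by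
        calc 2 * ∏ k ∈ S, x k ≤ Real.sqrt 2 ^ S.card * ∏ k ∈ S, x k :=
              mul_le_mul_of_nonneg_right h3 hxS_nonneg
          _ = ∏ k ∈ S, (Real.sqrt 2 * x k) := h2.symm
          _ ≤ _ := h1
      have h5 : 2 * ∏ k ∈ range m, x k ≤ ∏ k ∈ range m, (2 * (⌊x k⌋:ℝ) + 1) := by
        rw [← hsplitf, ← hsplitx, ← mul_assoc]
        exact mul_le_mul h4 hfc hxc_nonneg (by positivity)
      linarith
    · -- at most one big index
      push_neg at hcard
      have hcsmall : ∏ k ∈ (range m).filter (fun k => ¬ 1 ≤ x k), x k ≤ 1 := by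
        apply prod_le_one (fun k _ => hx0 k)
        intro k hk
        exact le_of_lt (not_le.1 (mem_filter.1 hk).2)
      have hfprod1 : (1:ℝ) ≤ ∏ k ∈ range m, (2 * (⌊x k⌋:ℝ) + 1) := by
        have := prod_le_prod (s := range m) (f := fun _ => (1:ℝ))
          (g := fun k => 2 * (⌊x k⌋:ℝ) + 1) (fun k _ => zero_le_one) hf1
        simpa using this
      interval_cases h : S.card
      · -- S empty
        have hSe : S = ∅ := card_eq_zero.1 h
        have : ∏ k ∈ range m, x k ≤ 1 := by
          rw [← hsplitx, ← hS, hSe, prod_empty, one_mul]; exact hcsmall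
        linarith
      · -- S = {i}
        obtain ⟨i, hSi⟩ := card_eq_one.1 h
        have hiS : i ∈ S := by rw [hSi]; exact mem_singleton_self i
        have hi1 : 1 ≤ x i := (mem_filter.1 hiS).2
        have hirange : i ∈ range m := mem_of_mem_filter i hiS
        have hxi : ∏ k ∈ range m, x k ≤ x i := by
          rw [← hsplitx, ← hS, hSi, prod_singleton]
          calc x i * ∏ k ∈ (range m).filter (fun k => ¬ 1 ≤ x k), x k
              ≤ x i * 1 := mul_le_mul_of_nonneg_left hcsmall (hx0 i)
            _ = x i := mul_one _
        have hfi : 2 * x i - 1 ≤ 2 * (⌊x i⌋:ℝ) + 1 := by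
          have := Int.sub_one_lt_floor (x i)
          linarith
        have hfc1 : (1:ℝ) ≤ ∏ k ∈ (range m).filter (fun k => ¬ 1 ≤ x k),
            (2 * (⌊x k⌋:ℝ) + 1) := by
          have := prod_le_prod (s := (range m).filter (fun k => ¬ 1 ≤ x k))
            (f := fun _ => (1:ℝ)) (g := fun k => 2 * (⌊x k⌋:ℝ) + 1)
            (fun k _ => zero_le_one)
            (fun k hk => hf1 k (mem_of_mem_filter k hk))
          simpa using this
        have hfprodi : 2 * (⌊x i⌋:ℝ) + 1 ≤ ∏ k ∈ range m, (2 * (⌊x k⌋:ℝ) + 1) := by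
          rw [← hsplitf, ← hS, hSi, prod_singleton]
          have hfi0 : (0:ℝ) ≤ 2 * (⌊x i⌋:ℝ) + 1 := le_trans zero_le_one (hf1 i hirange)
          nlinarith
        linarith [mul_le_mul_of_nonneg_left hxi (show (0:ℝ) ≤ 2 by norm_num)]
  -- conclude
  have hn1 : n = m + 1 := by omega
  have e1 : ∏ k ∈ range m, x k = (∏ k ∈ range m, (p k:ℝ)) * ε ^ m := by
    rw [hxdef]
    rw [prod_mul_distrib, prod_const, card_range]
  calc 2 * ε ^ n * ∏ k ∈ range m, (p k : ℝ)
      = ε * (2 * ∏ k ∈ range m, x k) := by rw [e1, hn1]; ring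
    _ ≤ ε * ((∏ k ∈ range m, (2 * (⌊x k⌋:ℝ) + 1)) + 1) :=
        mul_le_mul_of_nonneg_left key hε0.le
end

section
/- Let I_k = [z_k, z_k + N_k] ⊆ ℤ be intervals of integers such that the gaps (z_{k+1} − z_k − N_k) are increasing and unbounded, and let Λ_k ⊆ I_k be a uniformly random subset of size ℓ_k. If Σ_k ℓ_k²·N_{k−1}/N_k < ∞, then almost surely Λ = ⋃_k Λ_k is a t-set, i.e., for every nonzero integer t₀, Λ ∩ (Λ + t₀) is finite. -/
open MeasureTheory ProbabilityTheory
open scoped ENNReal Classical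


lemma aux_gap_sum (z : ℕ → ℤ) (N : ℕ → ℕ) :
    ∀ k j, j < k →
      (∑ i ∈ Finset.Ico j k, (z (i+1) - (z i + (N i : ℤ)))) ≤ z k - (z j + (N j : ℤ)) := by
  intro k
  induction k with
  | zero => exact fun j h => absurd h (Nat.not_lt_zero j)
  | succ k ih =>
    intro j hj
    rcases Nat.lt_succ_iff_lt_or_eq.mp hj with h | h
    · rw [Finset.sum_Ico_succ_top (le_of_lt h)]
      have h1 := ih j h
      have h2 : (0:ℤ) ≤ (N k : ℤ) := by positivity
      linarith
    · subst h
      rw [Finset.sum_Ico_succ_top le_rfl]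
      simp

lemma aux_min_sum (g : ℕ → ℤ) (K₀ : ℕ) (hg : ∀ i, K₀ ≤ i → 0 ≤ g i) (s : Finset ℕ) :
    (∑ i ∈ Finset.range K₀, min (g i) 0) ≤ ∑ i ∈ s, min (g i) 0 := by
  classical
  have h1 : ∑ i ∈ s, min (g i) 0 = ∑ i ∈ s.filter (· < K₀), min (g i) 0 := by
    refine (Finset.sum_filter_of_ne ?_).symm
    intro x _ hx
    by_contra h
    exact hx (min_eq_right (hg x (by omega)))
  rw [h1]
  have hsub : s.filter (· < K₀) ⊆ Finset.range K₀ := by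
    intro i hi
    simp only [Finset.mem_filter] at hi
    exact Finset.mem_range.mpr hi.2
  have := Finset.sum_sdiff (f := fun i => min (g i) 0) hsub
  have hnp : ∑ i ∈ Finset.range K₀ \ s.filter (· < K₀), min (g i) 0 ≤ 0 :=
    Finset.sum_nonpos fun i _ => min_le_right _ _
  linarith


lemma aux_count (I : Finset ℤ) (ℓk : ℕ) (t₀ : ℤ) (ht : t₀ ≠ 0) (x : ℤ) (hxI : x ∈ I) :
    ((I.powersetCard ℓk).filter (fun s => x ∈ s ∧ x + t₀ ∈ s)).card ≤
      (I.card - 2).choose (ℓk - 2) := by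
  by_cases hx2 : x + t₀ ∈ I
  · have hxt : x + t₀ ≠ x := by omega
    have hcard : ((I.erase x).erase (x + t₀)).card = I.card - 2 := by
      rw [Finset.card_erase_of_mem (Finset.mem_erase.mpr ⟨hxt, hx2⟩),
        Finset.card_erase_of_mem hxI]
      omega
    have := Finset.card_le_card_of_injOn
      (f := fun s => (s.erase x).erase (x + t₀))
      (s := (I.powersetCard ℓk).filter (fun s => x ∈ s ∧ x + t₀ ∈ s))
      (t := ((I.erase x).erase (x + t₀)).powersetCard (ℓk - 2))
      ?_ ?_
    · rw [Finset.card_powersetCard, hcard] at this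
      exact this
    · intro s hs
      simp only [Finset.mem_coe, Finset.mem_filter, Finset.mem_powersetCard] at hs
      obtain ⟨⟨hsub, hc⟩, hxs, hxts⟩ := hs
      rw [Finset.mem_coe, Finset.mem_powersetCard]
      constructor
      · intro a ha
        simp only [Finset.mem_erase] at ha ⊢
        exact ⟨ha.1, ha.2.1, hsub ha.2.2⟩
      · rw [Finset.card_erase_of_mem (Finset.mem_erase.mpr ⟨hxt, hxts⟩),
          Finset.card_erase_of_mem hxs, hc]
        omega
    · intro s₁ h₁ s₂ h₂ h
      simp only [Finset.coe_filter, Set.mem_setOf_eq, Finset.mem_powersetCard] at h₁ h₂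
      obtain ⟨⟨hsub₁, hc₁⟩, hx₁, hxt₁⟩ := h₁
      obtain ⟨⟨hsub₂, hc₂⟩, hx₂, hxt₂⟩ := h₂
      ext a
      by_cases hax : a = x
      · subst hax; simp [hx₁, hx₂]
      by_cases hat : a = x + t₀
      · subst hat; simp [hxt₁, hxt₂]
      have := Finset.ext_iff.mp h a
      simp only [Finset.mem_erase, hax, hat, not_false_iff, true_and] at this
      simpa [hax, hat] using this
  · have : ((I.powersetCard ℓk).filter (fun s => x ∈ s ∧ x + t₀ ∈ s)) = ∅ := by
      rw [Finset.filter_eq_empty_iff]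
      rintro s hs ⟨-, hmem⟩
      exact hx2 ((Finset.mem_powersetCard.mp hs).1 hmem)
    simp [this]

lemma aux_prob {Ω : Type*} [MeasurableSpace Ω] (P : Measure Ω)
    (zk : ℤ) (Nk ℓk : ℕ) (hNk : 0 < Nk) (hle : ℓk ≤ Nk + 1)
    (Lam : Ω → Finset ℤ)
    (hrange : ∀ ω, Lam ω ⊆ Finset.Icc zk (zk + (Nk : ℤ)) ∧ (Lam ω).card = ℓk)
    (hunif : ∀ s : Finset ℤ, s ⊆ Finset.Icc zk (zk + (Nk : ℤ)) → s.card = ℓk →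
      P {ω | Lam ω = s} = ((Nk + 1).choose ℓk : ℝ≥0∞)⁻¹)
    (t₀ : ℤ) (ht : t₀ ≠ 0) :
    P {ω | ∃ x, x ∈ Lam ω ∧ x + t₀ ∈ Lam ω} ≤ (ℓk ^ 2 : ℝ≥0∞) / (Nk : ℝ≥0∞) := by
  set I := Finset.Icc zk (zk + (Nk : ℤ)) with hI
  have hIcard : I.card = Nk + 1 := by
    rw [hI, Int.card_Icc]
    omega
  by_cases hℓ2 : ℓk < 2
  · have hempty : {ω | ∃ x, x ∈ Lam ω ∧ x + t₀ ∈ Lam ω} = ∅ := by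
      ext ω
      simp only [Set.mem_setOf_eq, Set.mem_empty_iff_false, iff_false, not_exists]
      rintro x ⟨h1, h2⟩
      have : 1 < (Lam ω).card := Finset.one_lt_card.mpr ⟨x, h1, x + t₀, h2, by omega⟩
      rw [(hrange ω).2] at this
      omega
    rw [hempty, measure_empty]
    exact zero_le
  push_neg at hℓ2
  set badS := (I.powersetCard ℓk).filter (fun s => ∃ x ∈ s, x + t₀ ∈ s) with hbadS
  -- union bound
  have hsubset : {ω | ∃ x, x ∈ Lam ω ∧ x + t₀ ∈ Lam ω} ⊆ ⋃ s ∈ badS, {ω | Lam ω = s} := by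
    rintro ω ⟨x, h1, h2⟩
    have hmem : Lam ω ∈ badS := by
      rw [hbadS, Finset.mem_filter, Finset.mem_powersetCard]
      exact ⟨⟨(hrange ω).1, (hrange ω).2⟩, x, h1, h2⟩
    exact Set.mem_biUnion hmem rfl
  have hub : P {ω | ∃ x, x ∈ Lam ω ∧ x + t₀ ∈ Lam ω} ≤
      (badS.card : ℝ≥0∞) * ((Nk + 1).choose ℓk : ℝ≥0∞)⁻¹ := by
    refine le_trans (measure_mono hsubset) (le_trans (measure_biUnion_finset_le _ _) ?_)
    have : ∀ s ∈ badS, P {ω | Lam ω = s} = ((Nk + 1).choose ℓk : ℝ≥0∞)⁻¹ := by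
      intro s hs
      rw [hbadS, Finset.mem_filter, Finset.mem_powersetCard] at hs
      exact hunif s hs.1.1 hs.1.2
    rw [Finset.sum_congr rfl this, Finset.sum_const, nsmul_eq_mul]
  -- counting bound
  have hcount : badS.card ≤ (Nk + 1) * (Nk - 1).choose (ℓk - 2) := by
    have hsub2 : badS ⊆ I.biUnion
        (fun x => (I.powersetCard ℓk).filter (fun s => x ∈ s ∧ x + t₀ ∈ s)) := by
      intro s hs
      rw [hbadS, Finset.mem_filter] at hs
      obtain ⟨hs1, x, hxs, hxts⟩ := hs
      exact Finset.mem_biUnion.mpr ⟨x, (Finset.mem_powersetCard.mp hs1).1 hxs,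
        Finset.mem_filter.mpr ⟨hs1, hxs, hxts⟩⟩
    calc badS.card ≤ (I.biUnion _).card := Finset.card_le_card hsub2
      _ ≤ ∑ x ∈ I, ((I.powersetCard ℓk).filter (fun s => x ∈ s ∧ x + t₀ ∈ s)).card :=
          Finset.card_biUnion_le
      _ ≤ ∑ _x ∈ I, (Nk - 1).choose (ℓk - 2) := by
          refine Finset.sum_le_sum fun x hx => ?_
          have := aux_count I ℓk t₀ ht x hx
          rwa [hIcard, show Nk + 1 - 2 = Nk - 1 by omega] at this
      _ = (Nk + 1) * (Nk - 1).choose (ℓk - 2) := by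
          rw [Finset.sum_const, hIcard, smul_eq_mul]
  -- numeric bound
  have key : Nk * ((Nk + 1) * (Nk - 1).choose (ℓk - 2)) ≤ ℓk ^ 2 * (Nk + 1).choose ℓk := by
    have e1 : Nk * (Nk - 1).choose (ℓk - 2) = Nk.choose (ℓk - 1) * (ℓk - 1) := by
      have := Nat.add_one_mul_choose_eq (Nk - 1) (ℓk - 2)
      rw [show Nk - 1 + 1 = Nk by omega, show ℓk - 2 + 1 = ℓk - 1 by omega] at this
      exact this
    have e2 : (Nk + 1) * Nk.choose (ℓk - 1) = (Nk + 1).choose ℓk * ℓk := by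
      have := Nat.add_one_mul_choose_eq Nk (ℓk - 1)
      rw [show ℓk - 1 + 1 = ℓk by omega] at this
      exact this
    calc Nk * ((Nk + 1) * (Nk - 1).choose (ℓk - 2))
        = (Nk + 1) * (Nk * (Nk - 1).choose (ℓk - 2)) := by ring
      _ = (Nk + 1) * (Nk.choose (ℓk - 1) * (ℓk - 1)) := by rw [e1]
      _ = ((Nk + 1) * Nk.choose (ℓk - 1)) * (ℓk - 1) := by ring
      _ = ((Nk + 1).choose ℓk * ℓk) * (ℓk - 1) := by rw [e2]
      _ ≤ ((Nk + 1).choose ℓk * ℓk) * ℓk := Nat.mul_le_mul_left _ (Nat.sub_le _ _)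
      _ = ℓk ^ 2 * (Nk + 1).choose ℓk := by ring
  -- assemble in ℝ≥0∞
  have hc0 : ((Nk + 1).choose ℓk : ℝ≥0∞) ≠ 0 := Nat.cast_ne_zero.mpr (Nat.choose_pos hle).ne'
  have hctop : ((Nk + 1).choose ℓk : ℝ≥0∞) ≠ ⊤ := ENNReal.natCast_ne_top _
  have hN0 : (Nk : ℝ≥0∞) ≠ 0 := Nat.cast_ne_zero.mpr hNk.ne'
  have hNtop : (Nk : ℝ≥0∞) ≠ ⊤ := ENNReal.natCast_ne_top _
  refine le_trans hub ?_
  have h1 : (badS.card : ℝ≥0∞) ≤ (((Nk + 1) * (Nk - 1).choose (ℓk - 2) : ℕ) : ℝ≥0∞) :=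
    Nat.cast_le.mpr hcount
  refine le_trans (mul_le_mul_left h1 _) ?_
  rw [← div_eq_mul_inv,
    ENNReal.le_div_iff_mul_le (Or.inl hN0) (Or.inl hNtop),
    div_eq_mul_inv, mul_right_comm, ← div_eq_mul_inv,
    ENNReal.div_le_iff hc0 hctop]
  have keyc : (Nk + 1) * (Nk - 1).choose (ℓk - 2) * Nk ≤ ℓk ^ 2 * (Nk + 1).choose ℓk := by
    calc (Nk + 1) * (Nk - 1).choose (ℓk - 2) * Nk
        = Nk * ((Nk + 1) * (Nk - 1).choose (ℓk - 2)) := by ring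
      _ ≤ ℓk ^ 2 * (Nk + 1).choose ℓk := key
  exact_mod_cast keyc


/-- Random t-sets in `ℤ`: if `Λ_k` is a uniformly random `ℓ_k`-subset of the interval
`[z_k, z_k + N_k] ⊆ ℤ`, the subsets are independent, the gaps between consecutive
intervals are increasing and unbounded, and `Σ_k ℓ_k²·N_{k−1}/N_k < ∞`, then almost
surely `Λ = ⋃_k Λ_k` meets each of its nontrivial translates in a finite set. -/
theorem random_subsets_almost_surely_tset {Ω : Type*} [MeasurableSpace Ω]
    (P : Measure Ω) [IsProbabilityMeasure P]
    (z : ℕ → ℤ) (N ℓ : ℕ → ℕ) (hN : ∀ k, 0 < N k)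
    (hgap_mono : Monotone fun k => z (k + 1) - (z k + (N k : ℤ)))
    (hgap_unbdd : ∀ M : ℤ, ∃ k, M < z (k + 1) - (z k + (N k : ℤ)))
    (Λ : ℕ → Ω → Finset ℤ)
    (hrange : ∀ k (ω : Ω), Λ k ω ⊆ Finset.Icc (z k) (z k + (N k : ℤ)) ∧
      (Λ k ω).card = ℓ k)
    (hunif : ∀ k (s : Finset ℤ), s ⊆ Finset.Icc (z k) (z k + (N k : ℤ)) →
      s.card = ℓ k → P {ω | Λ k ω = s} = ((N k + 1).choose (ℓ k) : ℝ≥0∞)⁻¹)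
    (hindep : iIndepFun (m := fun _ : ℕ => (⊤ : MeasurableSpace (Finset ℤ))) Λ P)
    (hsum : Summable fun k : ℕ => ((ℓ k : ℝ)) ^ 2 * (N (k - 1) : ℝ) / (N k : ℝ)) :
    ∀ᵐ ω ∂P, ∀ t₀ : ℤ, t₀ ≠ 0 →
      ((⋃ k, ((Λ k ω : Finset ℤ) : Set ℤ)) ∩
        ((· + t₀) '' ⋃ k, ((Λ k ω : Finset ℤ) : Set ℤ))).Finite := by
  classical
  have hne : Nonempty Ω := by
    by_contra h
    rw [not_nonempty_iff] at h
    have h1 : P Set.univ = 1 := measure_univ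
    rw [Set.univ_eq_empty_iff.mpr h, measure_empty] at h1
    exact zero_ne_one h1
  obtain ⟨ω₀⟩ := hne
  have hle : ∀ k, ℓ k ≤ N k + 1 := by
    intro k
    have h1 := Finset.card_le_card (hrange k ω₀).1
    rw [(hrange k ω₀).2, Int.card_Icc] at h1
    omega
  have hsum' : ∀ t₀ : ℤ, t₀ ≠ 0 →
      (∑' k, P {ω | ∃ x, x ∈ Λ k ω ∧ x + t₀ ∈ Λ k ω}) ≠ ⊤ := by
    intro t₀ ht
    have hbd : ∀ k, P {ω | ∃ x, x ∈ Λ k ω ∧ x + t₀ ∈ Λ k ω} ≤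
        ENNReal.ofReal ((ℓ k : ℝ) ^ 2 * (N (k - 1) : ℝ) / (N k : ℝ)) := by
      intro k
      have h1 := aux_prob P (z k) (N k) (ℓ k) (hN k) (hle k) (Λ k)
        (fun ω => hrange k ω) (hunif k) t₀ ht
      refine le_trans h1 ?_
      have heq : ENNReal.ofReal ((ℓ k : ℝ) ^ 2 * (N (k - 1) : ℝ) / (N k : ℝ))
          = ((ℓ k : ℝ≥0∞) ^ 2 * (N (k - 1) : ℝ≥0∞)) / (N k : ℝ≥0∞) := by
        rw [ENNReal.ofReal_div_of_pos (by exact_mod_cast hN k)]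
        congr 1
        · rw [show ((ℓ k : ℝ) ^ 2 * (N (k - 1) : ℝ))
              = ((ℓ k ^ 2 * N (k - 1) : ℕ) : ℝ) by push_cast; ring,
            ENNReal.ofReal_natCast]
          push_cast
          ring
        · rw [ENNReal.ofReal_natCast]
      rw [heq]
      refine ENNReal.div_le_div_right ?_ _
      exact le_mul_of_one_le_right zero_le (by exact_mod_cast Nat.one_le_cast.mpr (hN (k - 1)))
    refine ne_of_lt (lt_of_le_of_lt (ENNReal.tsum_le_tsum hbd) ?_)
    rw [← ENNReal.ofReal_tsum_of_nonneg (fun k => by positivity) hsum]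
    exact ENNReal.ofReal_lt_top
  have hall : ∀ᵐ ω ∂P, ∀ t₀ : ℤ, t₀ ≠ 0 → ∀ᶠ k in Filter.atTop,
      ¬∃ x, x ∈ Λ k ω ∧ x + t₀ ∈ Λ k ω := by
    rw [ae_all_iff]
    intro t₀
    by_cases ht : t₀ = 0
    · exact Filter.Eventually.of_forall (fun ω h => absurd ht h)
    · have hBC := MeasureTheory.ae_eventually_notMem (μ := P)
        (s := fun k => {ω | ∃ x, x ∈ Λ k ω ∧ x + t₀ ∈ Λ k ω}) (hsum' t₀ ht)
      filter_upwards [hBC] with ω h _ using h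
  obtain ⟨K₀, hK₀⟩ := hgap_unbdd 0
  have hgpos : ∀ i, K₀ ≤ i → 0 ≤ z (i + 1) - (z i + (N i : ℤ)) := by
    intro i hi
    have : z (K₀ + 1) - (z K₀ + (N K₀ : ℤ)) ≤ z (i + 1) - (z i + (N i : ℤ)) := hgap_mono hi
    linarith
  set C := ∑ i ∈ Finset.range K₀, min (z (i + 1) - (z i + (N i : ℤ))) 0 with hC
  filter_upwards [hall] with ω hω
  intro t₀ ht
  obtain ⟨K, hK⟩ := Filter.eventually_atTop.mp (hω t₀ ht)
  obtain ⟨K₁, hK₁⟩ := hgap_unbdd (|t₀| - C)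
  have hsep : ∀ k j, j < k → K₁ + 1 ≤ k → |t₀| < z k - (z j + (N j : ℤ)) := by
    intro k j hjk hk
    obtain ⟨m, rfl⟩ : ∃ m, k = m + 1 := ⟨k - 1, by omega⟩
    have hjm : j ≤ m := by omega
    have h1 := aux_gap_sum z N (m + 1) j hjk
    rw [Finset.sum_Ico_succ_top hjm] at h1
    have h2 : C ≤ ∑ i ∈ Finset.Ico j m, (z (i + 1) - (z i + (N i : ℤ))) := by
      refine le_trans (aux_min_sum _ K₀ hgpos (Finset.Ico j m)) ?_
      exact Finset.sum_le_sum fun i _ => min_le_left _ _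
    have h3 : z (K₁ + 1) - (z K₁ + (N K₁ : ℤ)) ≤ z (m + 1) - (z m + (N m : ℤ)) :=
      hgap_mono (by omega)
    linarith
  set M := max K (K₁ + 1) with hM
  have hM1 : K ≤ M := le_max_left _ _
  have hM2 : K₁ + 1 ≤ M := le_max_right _ _
  refine Set.Finite.subset (Set.Finite.biUnion (Set.finite_Iio M)
    (fun k _ => (Λ k ω).finite_toSet)) ?_
  rintro x ⟨hx1, hx2⟩
  rw [Set.mem_iUnion] at hx1
  obtain ⟨k, hk⟩ := hx1
  obtain ⟨y, hy, hyx⟩ := hx2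
  have hyx' : y + t₀ = x := hyx
  rw [Set.mem_iUnion] at hy
  obtain ⟨j, hj⟩ := hy
  have hk' : x ∈ Λ k ω := hk
  have hj' : y ∈ Λ j ω := hj
  have hxI := Finset.mem_Icc.mp ((hrange k ω).1 hk')
  have hyI := Finset.mem_Icc.mp ((hrange j ω).1 hj')
  refine Set.mem_biUnion (show k ∈ Set.Iio M from ?_) hk
  rw [Set.mem_Iio]
  by_contra hkM
  push_neg at hkM
  rcases lt_trichotomy j k with hlt | heq | hgt
  · have hs := hsep k j hlt (by omega)
    have := le_abs_self t₀
    omega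
  · subst heq
    exact hK j (by omega) ⟨y, hj', by rw [hyx']; exact hk'⟩
  · have hs := hsep j k hgt (by omega)
    have := neg_abs_le t₀
    omega
end
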